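/- For every integer n > 1, t_M([0, 1/n]) = 1/n. -/
import Mathlib

open Polynomial Filter

/-- The monic integer transfinite diameter of a set `I ⊆ ℝ`:
`t_M(I) = lim_{n→∞} inf_{p ∈ M_n} ‖p‖_I^{1/n}`, where `M_n` is the set of monic
integer polynomials of degree `n` (the limit is formalized as a `limsup`). -/
noncomputable def monicIntTransDiam (I : Set ℝ) : ℝ :=
  Filter.limsup (fun n : ℕ =>
    sInf {y : ℝ | ∃ p : Polynomial ℤ, p.Monic ∧ p.natDegree = n ∧
      y = (⨆ x : I, |Polynomial.aeval (x : ℝ) p|) ^ ((1 : ℝ) / n)}) Filter.atTop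

section aux

variable {n : ℕ}

/-- `n^m ⬝ p(1/n)` is the integer `(reverse p)(n)`. -/
lemma rev_eval_key (hn : 0 < n) (p : ℤ[X]) :
    ((p.reverse.eval (n : ℤ) : ℤ) : ℝ) * (1 / (n : ℝ)) ^ p.natDegree
      = Polynomial.aeval ((1 : ℝ) / n) p := by
  have hn0 : (n : ℝ) ≠ 0 := Nat.cast_ne_zero.2 hn.ne'
  have h1n : (1 / (n : ℝ)) ≠ 0 := one_div_ne_zero hn0
  letI : Invertible (1 / (n : ℝ)) := invertibleOfNonzero h1n
  have := Polynomial.eval₂_reverse_mul_pow (Int.castRingHom ℝ) (1 / (n : ℝ)) p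
  have hinv : (⅟ (1 / (n : ℝ)) : ℝ) = (n : ℝ) := by
    rw [invOf_eq_inv, one_div, inv_inv]
  rw [hinv] at this
  have hev : Polynomial.eval₂ (Int.castRingHom ℝ) ((n : ℝ)) p.reverse
      = ((p.reverse.eval (n : ℤ) : ℤ) : ℝ) := by
    have h4 : ((n : ℝ)) = (Int.castRingHom ℝ) ((n : ℤ)) := by simp
    rw [h4, Polynomial.eval₂_at_apply]
    rfl
  rw [hev] at this
  rw [this]
  rfl

lemma rev_eval_ne_zero (hn : 1 < n) {p : ℤ[X]} (hp : p.Monic) :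
    p.reverse.eval (n : ℤ) ≠ 0 := by
  haveI : Fact (1 < n) := ⟨hn⟩
  intro h
  have hzero : (Int.castRingHom (ZMod n)) ((n : ℤ)) = 0 := by
    simp [ZMod.natCast_self n]
  have h3 : (Int.castRingHom (ZMod n)) (p.reverse.eval (n : ℤ)) = 1 := by
    rw [← Polynomial.eval₂_at_apply, hzero, Polynomial.eval₂_at_zero,
      Polynomial.coeff_zero_reverse, hp.leadingCoeff]
    simp
  rw [h, map_zero] at h3
  exact zero_ne_one h3

end aux

theorem monicIntTransDiam_Icc_inv (n : ℕ) (hn : 1 < n) :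
    monicIntTransDiam (Set.Icc 0 (1 / (n : ℝ))) = 1 / (n : ℝ) := by
  have hn0 : (0 : ℕ) < n := lt_trans one_pos hn
  have hnR : (0 : ℝ) < (n : ℝ) := by exact_mod_cast hn0
  have hinv_pos : (0 : ℝ) < 1 / (n : ℝ) := by positivity
  set I : Set ℝ := Set.Icc 0 (1 / (n : ℝ)) with hI
  have hmemI : (1 / (n : ℝ)) ∈ I := Set.mem_Icc.2 ⟨le_of_lt hinv_pos, le_refl _⟩
  -- for every m ≥ 1 the inner inf is exactly 1/n
  have key : ∀ m : ℕ, 1 ≤ m →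
      sInf {y : ℝ | ∃ p : Polynomial ℤ, p.Monic ∧ p.natDegree = m ∧
        y = (⨆ x : I, |Polynomial.aeval (x : ℝ) p|) ^ ((1 : ℝ) / m)} = 1 / (n : ℝ) := by
    intro m hm
    have hm0 : (m : ℝ) ≠ 0 := Nat.cast_ne_zero.2 (by omega)
    have hmpos : (0 : ℝ) < 1 / (m : ℝ) := by positivity
    -- rpow computation : ((1/n)^m)^(1/m) = 1/n
    have hrpow : ((1 / (n : ℝ)) ^ m) ^ ((1 : ℝ) / m) = 1 / (n : ℝ) := by
      rw [← Real.rpow_natCast (1 / (n : ℝ)) m, ← Real.rpow_mul (le_of_lt hinv_pos),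
        mul_one_div_cancel hm0, Real.rpow_one]
    -- every member of the set is ≥ 1/n
    have lower : ∀ y ∈ {y : ℝ | ∃ p : Polynomial ℤ, p.Monic ∧ p.natDegree = m ∧
        y = (⨆ x : I, |Polynomial.aeval (x : ℝ) p|) ^ ((1 : ℝ) / m)}, 1 / (n : ℝ) ≤ y := by
      rintro y ⟨p, hp, hdeg, rfl⟩
      -- the sup is attained over a compact set; it is ≥ |p(1/n)| ≥ (1/n)^m
      have hcont : Continuous fun x : ℝ => |Polynomial.aeval x p| :=
        (Polynomial.continuous_aeval p).abs
      have hbdd : BddAbove (Set.range fun x : I => |Polynomial.aeval (x : ℝ) p|) := by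
        have hb := (((isCompact_Icc : IsCompact I)).image hcont).bddAbove
        rwa [Set.image_eq_range] at hb
      have hle1 : |Polynomial.aeval ((1 : ℝ) / n) p|
          ≤ ⨆ x : I, |Polynomial.aeval (x : ℝ) p| :=
        le_ciSup hbdd (⟨1 / (n : ℝ), hmemI⟩ : I)
      have hNne : p.reverse.eval (n : ℤ) ≠ 0 := rev_eval_ne_zero hn hp
      have hN1 : (1 : ℝ) ≤ |((p.reverse.eval (n : ℤ) : ℤ) : ℝ)| := by
        rw [← Int.cast_abs]
        exact_mod_cast Int.one_le_abs (by exact_mod_cast hNne)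
      have hval : (1 / (n : ℝ)) ^ m ≤ |Polynomial.aeval ((1 : ℝ) / n) p| := by
        rw [← rev_eval_key hn0 p, hdeg, abs_mul, abs_of_nonneg (by positivity :
          (0:ℝ) ≤ (1 / (n : ℝ)) ^ m)]
        nlinarith [pow_pos hinv_pos m]
      have hsup : (1 / (n : ℝ)) ^ m ≤ ⨆ x : I, |Polynomial.aeval (x : ℝ) p| :=
        le_trans hval hle1
      calc 1 / (n : ℝ) = ((1 / (n : ℝ)) ^ m) ^ ((1 : ℝ) / m) := hrpow.symm
        _ ≤ (⨆ x : I, |Polynomial.aeval (x : ℝ) p|) ^ ((1 : ℝ) / m) :=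
          Real.rpow_le_rpow (by positivity) hsup (le_of_lt hmpos)
    -- `X^m` witnesses membership of `1/n`
    have hmem : (1 / (n : ℝ)) ∈ {y : ℝ | ∃ p : Polynomial ℤ, p.Monic ∧ p.natDegree = m ∧
        y = (⨆ x : I, |Polynomial.aeval (x : ℝ) p|) ^ ((1 : ℝ) / m)} := by
      refine ⟨Polynomial.X ^ m, Polynomial.monic_X_pow m, Polynomial.natDegree_X_pow m, ?_⟩
      have hsup : (⨆ x : I, |Polynomial.aeval (x : ℝ) (Polynomial.X ^ m : ℤ[X])|)
          = (1 / (n : ℝ)) ^ m := by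
        apply IsGreatest.csSup_eq
        constructor
        · exact ⟨⟨1 / (n : ℝ), hmemI⟩, by
            simp [abs_of_nonneg (le_of_lt (pow_pos hinv_pos m))]⟩
        · rintro z ⟨⟨x, hx⟩, rfl⟩
          obtain ⟨hx0, hx1⟩ := Set.mem_Icc.1 hx
          simp only [map_pow, Polynomial.aeval_X]
          rw [abs_pow, abs_of_nonneg hx0]
          exact pow_le_pow_left₀ hx0 hx1 m
      rw [hsup, hrpow]
    exact le_antisymm (csInf_le ⟨1 / (n : ℝ), lower⟩ hmem) (le_csInf ⟨_, hmem⟩ lower)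
  -- conclude via the limsup of an eventually constant sequence
  unfold monicIntTransDiam
  have hev : ∀ᶠ m : ℕ in atTop,
      sInf {y : ℝ | ∃ p : Polynomial ℤ, p.Monic ∧ p.natDegree = m ∧
        y = (⨆ x : I, |Polynomial.aeval (x : ℝ) p|) ^ ((1 : ℝ) / m)}
      = (fun _ : ℕ => 1 / (n : ℝ)) m := by
    filter_upwards [eventually_ge_atTop 1] with m hm
    exact key m hm
  rw [limsup_congr hev, limsup_const]
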